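/- arXiv:1208.2895 — 3 statements merged into one kernel-verified Lean document; each statement's English description precedes it below -/
import Mathlib

section
/- Under the linear model Y = Ψ(X) + ε with E[X ⊗ ε] = 0, covariance operator C of X having strictly positive eigenvalues λⱼ with orthonormal eigenbasis (vⱼ) spanning H₁, and Δ = E[X ⊗ Y]: for every x ∈ H₁, Ψ(x) = Σⱼ₌₁^∞ (Δ(vⱼ)/λⱼ) ⟨vⱼ, x⟩, with the series converging in H₂. -/
open MeasureTheory
open scoped InnerProductSpace

/-- under the linear model `Y = Ψ(X) + ε` with `X ⊥ ε`, full-rank covariance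
operator `C` with eigenpairs `(λⱼ, vⱼ)`, `λⱼ > 0`, `(vⱼ)` an orthonormal basis of `H₁`, and
`Δ = E[X ⊗ Y]`: for every `x`, `Ψ(x) = Σⱼ (Δ(vⱼ)/λⱼ) ⟨vⱼ, x⟩`, the series converging in `H₂`. -/
theorem Psi_representation {H H₂ Ω : Type*}
    [NormedAddCommGroup H] [InnerProductSpace ℝ H] [CompleteSpace H]
    [NormedAddCommGroup H₂] [InnerProductSpace ℝ H₂] [CompleteSpace H₂]
    [MeasurableSpace Ω] (μ : Measure Ω) [IsProbabilityMeasure μ]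
    (X : Ω → H) (Y ε : Ω → H₂) (Ψ : H →L[ℝ] H₂)
    (hX4 : MemLp X 4 μ) (hε2 : MemLp ε 2 μ)
    (hXmean : ∫ ω, X ω ∂μ = 0) (hεmean : ∫ ω, ε ω ∂μ = 0)
    (hmodel : ∀ ω, Y ω = Ψ (X ω) + ε ω)
    (horth : ∀ x : H, ∀ y : H₂, ∫ ω, (⟪X ω, x⟫_ℝ * ⟪ε ω, y⟫_ℝ) ∂μ = 0)
    (hintX : ∀ x : H, Integrable (fun ω => ⟪X ω, x⟫_ℝ • X ω) μ)
    (hintY : ∀ x : H, Integrable (fun ω => ⟪X ω, x⟫_ℝ • Y ω) μ)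
    (C : H →L[ℝ] H) (hC : ∀ x : H, C x = ∫ ω, ⟪X ω, x⟫_ℝ • X ω ∂μ)
    (Δ : H →L[ℝ] H₂) (hΔ : ∀ x : H, Δ x = ∫ ω, ⟪X ω, x⟫_ℝ • Y ω ∂μ)
    (lam : ℕ → ℝ) (v : HilbertBasis ℕ ℝ H) (hpos : ∀ j, 0 < lam j)
    (heig : ∀ j, C (v j) = lam j • v j) (x : H) :
    HasSum (fun j => ⟪(v j : H), x⟫_ℝ • ((lam j)⁻¹ • Δ (v j))) (Ψ x) := by
  -- Key: Δ u = Ψ (C u) for all u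
  have key : ∀ u : H, Δ u = Ψ (C u) := by
    intro u
    have hintΨX : Integrable (fun ω => ⟪X ω, u⟫_ℝ • Ψ (X ω)) μ := by
      have := (Ψ.integrable_comp (hintX u))
      simpa [_root_.map_smul] using this
    have hintε : Integrable (fun ω => ⟪X ω, u⟫_ℝ • ε ω) μ := by
      have h : (fun ω => ⟪X ω, u⟫_ℝ • ε ω)
          = fun ω => ⟪X ω, u⟫_ℝ • Y ω - ⟪X ω, u⟫_ℝ • Ψ (X ω) := by
        funext ω; rw [hmodel ω]; simp [smul_add]
      rw [h]
      exact (hintY u).sub hintΨX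
    have hε0 : (∫ ω, ⟪X ω, u⟫_ℝ • ε ω ∂μ) = 0 := by
      apply integral_eq_zero_of_forall_integral_inner_eq_zero ℝ _ hintε
      intro y
      simpa [real_inner_smul_right, real_inner_comm, mul_comm] using horth u y
    rw [hΔ u, hC u]
    have hsplit : (fun ω => ⟪X ω, u⟫_ℝ • Y ω)
        = fun ω => ⟪X ω, u⟫_ℝ • Ψ (X ω) + ⟪X ω, u⟫_ℝ • ε ω := by
      funext ω; rw [hmodel ω]; simp [smul_add]
    rw [hsplit, integral_add hintΨX hintε, hε0, add_zero,
      ← Ψ.integral_comp_comm (hintX u)]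
    simp [_root_.map_smul]
  have hΔv : ∀ j, Δ (v j) = lam j • Ψ (v j) := by
    intro j
    rw [key, heig j, _root_.map_smul]
  have hterm : (fun j => ⟪(v j : H), x⟫_ℝ • ((lam j)⁻¹ • Δ (v j)))
      = fun j => Ψ (⟪(v j : H), x⟫_ℝ • (v j : H)) := by
    funext j
    rw [hΔv j, inv_smul_smul₀ (hpos j).ne', _root_.map_smul]
  rw [hterm]
  have := (v.hasSum_repr x).mapL Ψ
  simpa [HilbertBasis.repr_apply_apply] using this
end

section
/- Let C and Ĉ be compact self-adjoint positive operators on a separable Hilbert space H with eigenpairs (λⱼ, vⱼ) and (λ̂ⱼ, v̂ⱼ) respectively, eigenvalues in decreasing order, eigenvectors orthonormal. Fix j ≤ m and let P̂ₘ be the orthogonal projection onto span{v̂₁, ..., v̂ₘ}. If λ̂_{m+1} ≠ λ̂ⱼ, then ‖vⱼ − P̂ₘ(vⱼ)‖² ≤ 4 ‖C − Ĉ‖² / (λ̂_{m+1} − λ̂ⱼ)². -/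
open scoped InnerProductSpace

section Aux

variable {H : Type*} [NormedAddCommGroup H] [InnerProductSpace ℝ H] [CompleteSpace H]

/-- Parseval: the squared coefficients sum to the squared norm. -/
lemma aux_parseval (b : HilbertBasis ℕ ℝ H) (x : H) :
    HasSum (fun k => ⟪(b k : H), x⟫_ℝ ^ 2) (‖x‖ ^ 2) := by
  have h := b.hasSum_inner_mul_inner x x
  have hx : ⟪x, x⟫_ℝ = ‖x‖ ^ 2 := real_inner_self_eq_norm_sq x
  rw [hx] at h
  have e : (fun k => ⟪(b k : H), x⟫_ℝ ^ 2) = fun k => ⟪x, (b k : H)⟫_ℝ * ⟪(b k : H), x⟫_ℝ := by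
    funext k
    rw [real_inner_comm x (b k)]
    ring
  rw [e]; exact h

/-- Spectral identity: `⟪C x, x⟫ = ∑' k, λ k * ⟪v k, x⟫²` as a `HasSum`. -/
lemma aux_spectral (C : H →L[ℝ] H) (hCsa : IsSelfAdjoint C)
    (lam : ℕ → ℝ) (v : HilbertBasis ℕ ℝ H) (hv : ∀ j, C (v j) = lam j • v j) (x : H) :
    HasSum (fun k => lam k * ⟪(v k : H), x⟫_ℝ ^ 2) ⟪C x, x⟫_ℝ := by
  have h := v.hasSum_inner_mul_inner (C x) x
  have hsymm := hCsa.isSymmetric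
  have e : (fun k => lam k * ⟪(v k : H), x⟫_ℝ ^ 2)
      = fun k => ⟪C x, (v k : H)⟫_ℝ * ⟪(v k : H), x⟫_ℝ := by
    funext k
    rw [show ⟪C x, (v k : H)⟫_ℝ = ⟪x, C (v k)⟫_ℝ from hsymm x (v k),
      hv k, inner_smul_right, real_inner_comm x (v k)]
    ring
  rw [e]; exact h

/-- eigenvalue coefficient relation. -/
lemma aux_coeff (C Chat : H →L[ℝ] H) (hChatsa : IsSelfAdjoint Chat)
    (lam lamhat : ℕ → ℝ) (v vhat : HilbertBasis ℕ ℝ H)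
    (hv : ∀ j, C (v j) = lam j • v j) (hvhat : ∀ j, Chat (vhat j) = lamhat j • vhat j)
    (j k : ℕ) :
    ⟪(vhat k : H), (C - Chat) (v j)⟫_ℝ
      = (lam j - lamhat k) * ⟪(vhat k : H), (v j : H)⟫_ℝ := by
  have h1 : ⟪(vhat k : H), C (v j)⟫_ℝ = lam j * ⟪(vhat k : H), (v j : H)⟫_ℝ := by
    rw [hv j, inner_smul_right]
  have h2 : ⟪(vhat k : H), Chat (v j)⟫_ℝ = lamhat k * ⟪(vhat k : H), (v j : H)⟫_ℝ := by
    rw [show ⟪(vhat k : H), Chat (v j)⟫_ℝ = ⟪Chat (vhat k), (v j : H)⟫_ℝ from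
      (hChatsa.isSymmetric (vhat k) (v j)).symm, hvhat k, inner_smul_left]
    simp
  simp only [ContinuousLinearMap.sub_apply, inner_sub_right, h1, h2]
  ring

/-- Weyl-type inequality `λ̂ⱼ ≤ λⱼ + ‖C - Ĉ‖`. -/
lemma aux_weyl (C Chat : H →L[ℝ] H)
    (hCsa : IsSelfAdjoint C)
    (lam lamhat : ℕ → ℝ) (hlam : Antitone lam) (hlamhat : Antitone lamhat)
    (v vhat : HilbertBasis ℕ ℝ H)
    (hv : ∀ j, C (v j) = lam j • v j) (hvhat : ∀ j, Chat (vhat j) = lamhat j • vhat j)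
    (j : ℕ) : lamhat j ≤ lam j + ‖C - Chat‖ := by
  classical
  -- the (j+1)-dimensional synthesis map
  set n := j + 1 with hn
  let S : (Fin n → ℝ) →ₗ[ℝ] H :=
    { toFun := fun c => ∑ k : Fin n, c k • (vhat (k : ℕ) : H)
      map_add' := by
        intro a b
        simp [add_smul, Finset.sum_add_distrib]
      map_smul' := by
        intro r a
        simp [smul_smul, Finset.smul_sum] }
  let L : (Fin n → ℝ) →ₗ[ℝ] (Fin j → ℝ) :=
    LinearMap.pi fun i : Fin j => (innerSL ℝ (v (i : ℕ) : H)).toLinearMap.comp S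
  have hLnotinj : ¬ Function.Injective L := by
    intro hinj
    have := LinearMap.finrank_le_finrank_of_injective hinj
    simp [Module.finrank_pi] at this
    omega
  have hker : ∃ c : Fin n → ℝ, c ≠ 0 ∧ L c = 0 := by
    rw [Function.not_injective_iff] at hLnotinj
    obtain ⟨a, b, hab, hne⟩ := hLnotinj
    exact ⟨a - b, sub_ne_zero_of_ne hne, by rw [map_sub, hab, sub_self]⟩
  obtain ⟨c, hc0, hLc⟩ := hker
  set x : H := S c with hx
  -- orthonormality of the restricted family
  have hon : Orthonormal ℝ (fun k : Fin n => (vhat (k : ℕ) : H)) :=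
    vhat.orthonormal.comp (fun k : Fin n => (k : ℕ)) (fun a b h => Fin.ext h)
  have hcoeff : ∀ k : Fin n, ⟪(vhat (k : ℕ) : H), x⟫_ℝ = c k := by
    intro k
    exact hon.inner_right_fintype c k
  have hxne : x ≠ 0 := by
    intro h
    apply hc0
    funext k
    have := hcoeff k
    rw [h, inner_zero_right] at this
    exact this.symm
  have hxnorm : (0:ℝ) < ‖x‖ ^ 2 := by
    have h0 : 0 < ‖x‖ := norm_pos_iff.mpr hxne
    positivity
  -- ⟪x, x⟫ = ∑ c k ^ 2
  have hinner_sum : ∀ d : Fin n → ℝ, ⟪S d, x⟫_ℝ = ∑ k : Fin n, d k * c k := by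
    intro d
    show ⟪∑ k : Fin n, d k • (vhat (k : ℕ) : H), ∑ k : Fin n, c k • (vhat (k : ℕ) : H)⟫_ℝ = _
    rw [inner_sum]
    refine Finset.sum_congr rfl fun k _ => ?_
    rw [inner_smul_right, hon.inner_left_fintype d k]
    simp [mul_comm]
  have hxx : ‖x‖ ^ 2 = ∑ k : Fin n, c k ^ 2 := by
    rw [← real_inner_self_eq_norm_sq]
    rw [hinner_sum c]
    congr 1; funext k; ring
  -- lower bound for ⟪Chat x, x⟫
  have hChatx : Chat x = S (fun k => lamhat (k : ℕ) * c k) := by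
    show Chat (∑ k : Fin n, c k • (vhat (k : ℕ) : H))
      = ∑ k : Fin n, (lamhat (k : ℕ) * c k) • (vhat (k : ℕ) : H)
    rw [map_sum]
    refine Finset.sum_congr rfl fun k _ => ?_
    rw [ContinuousLinearMap.map_smul, hvhat (k : ℕ), smul_smul, mul_comm]
  have hChat_lb : lamhat j * ‖x‖ ^ 2 ≤ ⟪Chat x, x⟫_ℝ := by
    rw [hChatx, hinner_sum, hxx, Finset.mul_sum]
    apply Finset.sum_le_sum
    intro k _
    have hkj : (k : ℕ) ≤ j := Nat.lt_succ_iff.mp k.isLt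
    have := hlamhat hkj
    nlinarith [sq_nonneg (c k)]
  -- upper bound for ⟪C x, x⟫
  have hxj : ∀ i : ℕ, i < j → ⟪(v i : H), x⟫_ℝ = 0 := by
    intro i hi
    have := congrFun hLc ⟨i, hi⟩
    exact this
  have hC_ub : ⟪C x, x⟫_ℝ ≤ lam j * ‖x‖ ^ 2 := by
    have h1 := aux_spectral C hCsa lam v hv x
    have h2 := (aux_parseval v x).mul_left (lam j)
    refine hasSum_le (fun k => ?_) h1 h2
    rcases lt_or_ge k j with hk | hk
    · rw [hxj k hk]; simp
    · have := hlam hk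
      nlinarith [sq_nonneg (⟪(v k : H), x⟫_ℝ)]
  -- perturbation bound
  have hpert : ⟪Chat x, x⟫_ℝ - ⟪C x, x⟫_ℝ ≤ ‖C - Chat‖ * ‖x‖ ^ 2 := by
    have h1 : ⟪Chat x, x⟫_ℝ - ⟪C x, x⟫_ℝ = ⟪(Chat - C) x, x⟫_ℝ := by
      simp [inner_sub_left]
    have hnn : ‖Chat - C‖ = ‖C - Chat‖ := norm_sub_rev _ _
    rw [h1]
    calc ⟪(Chat - C) x, x⟫_ℝ ≤ ‖(Chat - C) x‖ * ‖x‖ := real_inner_le_norm _ _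
      _ ≤ (‖Chat - C‖ * ‖x‖) * ‖x‖ := by
          apply mul_le_mul_of_nonneg_right ((Chat - C).le_opNorm x) (norm_nonneg x)
      _ = ‖C - Chat‖ * ‖x‖ ^ 2 := by rw [hnn]; ring
  nlinarith [hChat_lb, hC_ub, hpert, hxnorm]

end Aux

set_option maxHeartbeats 1000000 in
/-- eigenvector-subspace perturbation: with `C, Ĉ` compact self-adjoint positive
operators with eigenpairs `(λⱼ, vⱼ)`, `(λ̂ⱼ, v̂ⱼ)` (decreasing eigenvalues, orthonormal bases of
eigenvectors), `P̂ₘ` the orthogonal projection onto `span{v̂₁,...,v̂ₘ}` (so that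
`P̂ₘ(vⱼ) = Σₖ₌₁ᵐ ⟨v̂ₖ, vⱼ⟩ v̂ₖ`), for `j ≤ m` (0-indexed: `j < m`) with `λ̂_{m+1} ≠ λ̂ⱼ` we have
`‖vⱼ − P̂ₘ(vⱼ)‖² ≤ 4‖C − Ĉ‖²/(λ̂_{m+1} − λ̂ⱼ)²`. -/
theorem eigenvector_subspace_perturbation {H : Type*}
    [NormedAddCommGroup H] [InnerProductSpace ℝ H] [CompleteSpace H]
    (C Chat : H →L[ℝ] H)
    (hCc : IsCompactOperator C) (hChatc : IsCompactOperator Chat)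
    (hCsa : IsSelfAdjoint C) (hChatsa : IsSelfAdjoint Chat)
    (hCpos : ∀ z : H, 0 ≤ ⟪C z, z⟫_ℝ) (hChatpos : ∀ z : H, 0 ≤ ⟪Chat z, z⟫_ℝ)
    (lam lamhat : ℕ → ℝ) (hlam : Antitone lam) (hlamhat : Antitone lamhat)
    (v vhat : HilbertBasis ℕ ℝ H)
    (hv : ∀ j, C (v j) = lam j • v j) (hvhat : ∀ j, Chat (vhat j) = lamhat j • vhat j)
    (j m : ℕ) (hjm : j < m) (hne : lamhat m ≠ lamhat j) :
    ‖(v j : H) - ∑ k ∈ Finset.range m, ⟪(vhat k : H), (v j : H)⟫_ℝ • (vhat k : H)‖ ^ 2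
      ≤ 4 * ‖C - Chat‖ ^ 2 / (lamhat m - lamhat j) ^ 2 := by
  classical
  set a : ℕ → ℝ := fun k => ⟪(vhat k : H), (v j : H)⟫_ℝ with ha
  set p : H := ∑ k ∈ Finset.range m, a k • (vhat k : H) with hp
  set ε : ℝ := ‖C - Chat‖ with hε
  have hεnn : 0 ≤ ε := norm_nonneg _
  have hg : lamhat m < lamhat j := lt_of_le_of_ne (hlamhat hjm.le) hne
  set g : ℝ := lamhat j - lamhat m with hgdef
  have hgpos : 0 < g := by simp [hgdef]; linarith
  have hsq : (lamhat m - lamhat j) ^ 2 = g ^ 2 := by rw [hgdef]; ring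
  -- coefficients of p
  have hpk : ∀ k ∈ Finset.range m, ⟪(vhat k : H), p⟫_ℝ = a k := by
    intro k hk
    exact vhat.orthonormal.inner_right_sum a hk
  -- p ⊥ (v j - p)
  have hperp : ⟪p, (v j : H) - p⟫_ℝ = 0 := by
    rw [hp, sum_inner]
    apply Finset.sum_eq_zero
    intro k hk
    rw [inner_smul_left, inner_sub_right, hpk k hk]
    simp
    exact Or.inr (sub_self _)
  -- Pythagoras
  have hnormvj : ‖(v j : H)‖ = 1 := v.orthonormal.1 j
  have hpyth : ‖(v j : H)‖ ^ 2 = ‖p‖ ^ 2 + ‖(v j : H) - p‖ ^ 2 := by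
    have : (v j : H) = p + ((v j : H) - p) := by abel
    calc ‖(v j : H)‖ ^ 2 = ‖p + ((v j : H) - p)‖ ^ 2 := by rw [← this]
      _ = ‖p‖ ^ 2 + 2 * ⟪p, (v j : H) - p⟫_ℝ + ‖(v j : H) - p‖ ^ 2 := norm_add_sq_real _ _
      _ = ‖p‖ ^ 2 + ‖(v j : H) - p‖ ^ 2 := by rw [hperp]; ring
  have hpnorm : ‖p‖ ^ 2 = ∑ k ∈ Finset.range m, a k ^ 2 := by
    rw [← real_inner_self_eq_norm_sq, hp, sum_inner]
    apply Finset.sum_congr rfl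
    intro k hk
    rw [inner_smul_left, hpk k hk]
    simp [sq]
  have hkey : ‖(v j : H) - p‖ ^ 2 = 1 - ∑ k ∈ Finset.range m, a k ^ 2 := by
    have := hpyth
    rw [hnormvj, hpnorm] at this
    linarith
  -- Parseval for a
  have hPars : HasSum (fun k => a k ^ 2) 1 := by
    have := aux_parseval vhat (v j)
    rwa [hnormvj, one_pow] at this
  have hParsTsum : ∑' k, a k ^ 2 = 1 := hPars.tsum_eq
  have hanonneg : ∀ k, 0 ≤ a k ^ 2 := fun k => sq_nonneg _
  -- tail expression
  have htail : ‖(v j : H) - p‖ ^ 2 = ∑' i, a (i + m) ^ 2 := by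
    have h := hPars.summable.sum_add_tsum_nat_add m
    rw [hParsTsum] at h
    rw [hkey]
    linarith
  have hεsq : 0 ≤ 4 * ε ^ 2 / g ^ 2 := by positivity
  rw [hsq]
  rcases le_or_gt g (2 * ε) with hcase | hcase
  · -- trivial case : RHS ≥ 1 ≥ LHS
    have hle1 : ‖(v j : H) - p‖ ^ 2 ≤ 1 := by
      rw [hkey]
      have : 0 ≤ ∑ k ∈ Finset.range m, a k ^ 2 := Finset.sum_nonneg fun k _ => hanonneg k
      linarith
    have h1le : (1:ℝ) ≤ 4 * ε ^ 2 / g ^ 2 := by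
      rw [le_div_iff₀ (by positivity)]
      nlinarith
    calc ‖(v j : H) - p‖ ^ 2 ≤ 1 := hle1
      _ ≤ 4 * ε ^ 2 / g ^ 2 := h1le
  · -- main case
    have hweyl := aux_weyl C Chat hCsa lam lamhat hlam hlamhat v vhat hv hvhat j
    set b : ℕ → ℝ := fun k => ⟪(vhat k : H), (C - Chat) (v j)⟫_ℝ with hb
    have hbk : ∀ k, b k = (lam j - lamhat k) * a k := fun k =>
      aux_coeff C Chat hChatsa lam lamhat v vhat hv hvhat j k
    -- Parseval for b
    have hbPars : HasSum (fun k => b k ^ 2) (‖(C - Chat) (v j)‖ ^ 2) :=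
      aux_parseval vhat ((C - Chat) (v j))
    have hEbound : ‖(C - Chat) (v j)‖ ^ 2 ≤ ε ^ 2 := by
      have h1 : ‖(C - Chat) (v j)‖ ≤ ε * ‖(v j : H)‖ := (C - Chat).le_opNorm _
      rw [hnormvj, mul_one] at h1
      nlinarith [norm_nonneg ((C - Chat) (v j))]
    -- gap bound for k ≥ m
    have hgap : ∀ k, m ≤ k → g / 2 ≤ lam j - lamhat k := by
      intro k hk
      have h1 := hlamhat hk
      have : lamhat j - ε ≤ lam j := by linarith
      simp only [hgdef]
      linarith
    -- termwise bound for the tail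
    have hterm : ∀ i : ℕ, a (i + m) ^ 2 ≤ (4 / g ^ 2) * b (i + m) ^ 2 := by
      intro i
      have hk : m ≤ i + m := Nat.le_add_left m i
      have h1 := hgap (i + m) hk
      have h2 := hbk (i + m)
      have h4 : (g / 2) ^ 2 ≤ (lam j - lamhat (i + m)) ^ 2 := by
        have h3 : (0:ℝ) ≤ g / 2 := by linarith
        exact pow_le_pow_left₀ h3 h1 2
      have hgq : (g / 2) ^ 2 * a (i + m) ^ 2 ≤ b (i + m) ^ 2 := by
        calc (g / 2) ^ 2 * a (i + m) ^ 2
            ≤ (lam j - lamhat (i + m)) ^ 2 * a (i + m) ^ 2 :=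
              mul_le_mul_of_nonneg_right h4 (sq_nonneg _)
          _ = ((lam j - lamhat (i + m)) * a (i + m)) ^ 2 := by ring
          _ = b (i + m) ^ 2 := by rw [h2]
      rw [div_mul_eq_mul_div, le_div_iff₀ (by positivity)]
      nlinarith [hgq]
    -- summability of the tails
    have hasum : Summable fun i => a (i + m) ^ 2 :=
      ((summable_nat_add_iff m).2 hPars.summable)
    have hbsum : Summable fun i => b (i + m) ^ 2 :=
      ((summable_nat_add_iff m).2 hbPars.summable)
    have htsum1 : ∑' i, a (i + m) ^ 2 ≤ (4 / g ^ 2) * ∑' i, b (i + m) ^ 2 := by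
      rw [← tsum_mul_left]
      exact Summable.tsum_le_tsum hterm hasum (hbsum.mul_left _)
    have htsum2 : ∑' i, b (i + m) ^ 2 ≤ ‖(C - Chat) (v j)‖ ^ 2 := by
      have h := hbPars.summable.sum_add_tsum_nat_add m
      rw [hbPars.tsum_eq] at h
      have hpart : 0 ≤ ∑ i ∈ Finset.range m, b i ^ 2 :=
        Finset.sum_nonneg fun k _ => sq_nonneg _
      linarith
    have htsum3 : ∑' i, b (i + m) ^ 2 ≤ ε ^ 2 := le_trans htsum2 hEbound
    calc ‖(v j : H) - p‖ ^ 2 = ∑' i, a (i + m) ^ 2 := htail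
      _ ≤ (4 / g ^ 2) * ∑' i, b (i + m) ^ 2 := htsum1
      _ ≤ (4 / g ^ 2) * ε ^ 2 := by
          apply mul_le_mul_of_nonneg_left htsum3 (by positivity)
      _ = 4 * ε ^ 2 / g ^ 2 := by ring
end

section
/- Let C and Ĉ be compact self-adjoint positive operators on a separable Hilbert space H, with (λⱼ, vⱼ) and (λ̂ⱼ, v̂ⱼ) their eigenpairs in decreasing eigenvalue order, and orthonormal eigenvectors. For j ≥ 1 and the intermediate step of the perturbation argument: (λ̂_{m+1} − λ̂ⱼ)² Σ_{k>m} ⟨vⱼ, v̂ₖ⟩² ≤ 2 ‖(Ĉ − C)(vⱼ)‖² + 2 |λ̂ⱼ − λⱼ|² for all m ≥ j. -/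
open scoped InnerProductSpace

/-- intermediate perturbation estimate: with `C, Ĉ` compact self-adjoint positive
operators with eigenpairs `(λⱼ, vⱼ)`, `(λ̂ⱼ, v̂ⱼ)` in decreasing eigenvalue order (orthonormal
bases of eigenvectors), for all `m ≥ j` (0-indexed: `j < m+1`, i.e. `j ≤ m`):
`(λ̂_{m+1} − λ̂ⱼ)² Σ_{k>m} ⟨vⱼ, v̂ₖ⟩² ≤ 2‖(Ĉ − C)(vⱼ)‖² + 2|λ̂ⱼ − λⱼ|²`
(0-indexed: `λ̂_{m+1}` is `lamhat m` and `Σ_{k>m}` runs over indices `k ≥ m`). -/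
theorem perturbation_intermediate {H : Type*}
    [NormedAddCommGroup H] [InnerProductSpace ℝ H] [CompleteSpace H]
    (C Chat : H →L[ℝ] H)
    (hCc : IsCompactOperator C) (hChatc : IsCompactOperator Chat)
    (hCsa : IsSelfAdjoint C) (hChatsa : IsSelfAdjoint Chat)
    (hCpos : ∀ z : H, 0 ≤ ⟪C z, z⟫_ℝ) (hChatpos : ∀ z : H, 0 ≤ ⟪Chat z, z⟫_ℝ)
    (lam lamhat : ℕ → ℝ) (hlam : Antitone lam) (hlamhat : Antitone lamhat)
    (v vhat : HilbertBasis ℕ ℝ H)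
    (hv : ∀ j, C (v j) = lam j • v j) (hvhat : ∀ j, Chat (vhat j) = lamhat j • vhat j)
    (j m : ℕ) (hjm : j < m) :
    (lamhat m - lamhat j) ^ 2 * (∑' k : {k : ℕ // m ≤ k}, ⟪(v j : H), (vhat (k : ℕ) : H)⟫_ℝ ^ 2)
      ≤ 2 * ‖(Chat - C) (v j)‖ ^ 2 + 2 * |lamhat j - lam j| ^ 2 := by

  have hsym := ContinuousLinearMap.isSelfAdjoint_iff_isSymmetric.mp hChatsa
  set x : H := Chat (v j) - lamhat j • (v j : H) with hxdef
  have hx : ∀ k, ⟪x, (vhat k : H)⟫_ℝ = (lamhat k - lamhat j) * ⟪(v j : H), (vhat k : H)⟫_ℝ := by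
    intro k
    rw [hxdef, inner_sub_left, real_inner_smul_left]
    have h1 : ⟪Chat (v j), (vhat k : H)⟫_ℝ = ⟪(v j : H), Chat (vhat k)⟫_ℝ := hsym _ _
    rw [h1, hvhat k, real_inner_smul_right]
    ring
  have hHS : HasSum (fun k => ⟪x, (vhat k : H)⟫_ℝ ^ 2) (‖x‖ ^ 2) := by
    have := vhat.hasSum_inner_mul_inner x x
    rw [real_inner_self_eq_norm_sq] at this
    have e : (fun k => ⟪x, (vhat k : H)⟫_ℝ ^ 2) = fun i => ⟪x, (vhat i : H)⟫_ℝ * ⟪(vhat i : H), x⟫_ℝ := by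
      funext k
      rw [sq, real_inner_comm x (vhat k : H)]
    rw [e]; exact this
  have hsumx : Summable (fun k => ⟪x, (vhat k : H)⟫_ℝ ^ 2) := hHS.summable
  have hterm : ∀ k : {k : ℕ // m ≤ k},
      (lamhat m - lamhat j) ^ 2 * ⟪(v j : H), (vhat (k : ℕ) : H)⟫_ℝ ^ 2
        ≤ ⟪x, (vhat (k : ℕ) : H)⟫_ℝ ^ 2 := by
    rintro ⟨k, hk⟩
    rw [hx k, mul_pow]
    have h1 : lamhat k ≤ lamhat m := hlamhat hk
    have h2 : lamhat m ≤ lamhat j := hlamhat hjm.le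
    have : (lamhat m - lamhat j) ^ 2 ≤ (lamhat k - lamhat j) ^ 2 := by nlinarith
    nlinarith [sq_nonneg (⟪(v j : H), (vhat k : H)⟫_ℝ)]
  have hsumsub : Summable (fun k : {k : ℕ // m ≤ k} => ⟪x, (vhat (k : ℕ) : H)⟫_ℝ ^ 2) :=
    hsumx.subtype _
  have hLHSsum : Summable (fun k : {k : ℕ // m ≤ k} =>
      (lamhat m - lamhat j) ^ 2 * ⟪(v j : H), (vhat (k : ℕ) : H)⟫_ℝ ^ 2) :=
    Summable.of_nonneg_of_le (fun k => by positivity) hterm hsumsub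
  have step1 : (lamhat m - lamhat j) ^ 2
        * (∑' k : {k : ℕ // m ≤ k}, ⟪(v j : H), (vhat (k : ℕ) : H)⟫_ℝ ^ 2)
      ≤ ∑' k : {k : ℕ // m ≤ k}, ⟪x, (vhat (k : ℕ) : H)⟫_ℝ ^ 2 := by
    rw [← tsum_mul_left]
    exact Summable.tsum_le_tsum hterm hLHSsum hsumsub
  have step2 : (∑' k : {k : ℕ // m ≤ k}, ⟪x, (vhat (k : ℕ) : H)⟫_ℝ ^ 2)
      ≤ ∑' k : ℕ, ⟪x, (vhat k : H)⟫_ℝ ^ 2 :=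
    Summable.tsum_le_tsum_of_inj (Subtype.val) Subtype.val_injective
      (fun c _ => sq_nonneg _) (fun k => le_refl _) hsumsub hsumx
  have step3 : (∑' k : ℕ, ⟪x, (vhat k : H)⟫_ℝ ^ 2) = ‖x‖ ^ 2 := hHS.tsum_eq
  have hxeq : x = (Chat - C) (v j) + (lam j - lamhat j) • (v j : H) := by
    rw [hxdef]
    simp [ContinuousLinearMap.sub_apply, hv j, sub_smul]
  have hnv : ‖(v j : H)‖ = 1 := v.orthonormal.1 j
  have hb : ‖(lam j - lamhat j) • (v j : H)‖ = |lamhat j - lam j| := by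
    rw [norm_smul, Real.norm_eq_abs, hnv, mul_one, abs_sub_comm]
  have htri : ‖x‖ ≤ ‖(Chat - C) (v j)‖ + |lamhat j - lam j| := by
    rw [hxeq]
    calc ‖(Chat - C) (v j) + (lam j - lamhat j) • (v j : H)‖
        ≤ ‖(Chat - C) (v j)‖ + ‖(lam j - lamhat j) • (v j : H)‖ := norm_add_le _ _
      _ = _ := by rw [hb]
  have step4 : ‖x‖ ^ 2 ≤ 2 * ‖(Chat - C) (v j)‖ ^ 2 + 2 * |lamhat j - lam j| ^ 2 := by
    nlinarith [norm_nonneg x, norm_nonneg ((Chat - C) (v j)), abs_nonneg (lamhat j - lam j),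
      sq_nonneg (‖(Chat - C) (v j)‖ - |lamhat j - lam j|)]
  linarith
end
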